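/- Let (Ω, P) be a probability space, τ ∈ (0,1), f₁ > 0 and f₀ > 0 real constants, and M₁, M₀ : Ω → ℝ square-integrable random variables. Define Σ = (τ − τ² − E[M₁²])/f₁² + (τ − τ² − E[M₀²])/f₀² + (1/2)·E[(M₁/f₁ − M₀/f₀)²] and Σ† = (τ − τ²)/f₁² + (τ − τ²)/f₀². Then Σ† − Σ = (1/2)·E[(M₁/f₁ + M₀/f₀)²]; in particular Σ† ≥ Σ, with equality when M₁ = 0 and M₀ = 0 almost surely. -/

import Mathlib

open MeasureTheory

/-- Comparison of the asymptotic variance of the QTE estimator under matched-pairs design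
(`Σ`) with that under simple random sampling (`Σ†`):
`Σ† − Σ = (1/2)·E[(M₁/f₁ + M₀/f₀)²] ≥ 0`, with equality when `M₁ = 0` and `M₀ = 0` a.s. -/
theorem variance_comparison_srs
    {Ω : Type*} [MeasurableSpace Ω] (P : Measure Ω) [IsProbabilityMeasure P]
    (τ f₁ f₀ : ℝ) (hτ : τ ∈ Set.Ioo (0 : ℝ) 1) (hf₁ : 0 < f₁) (hf₀ : 0 < f₀)
    (M₁ M₀ : Ω → ℝ) (hM₁ : MemLp M₁ 2 P) (hM₀ : MemLp M₀ 2 P) :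
    ((τ - τ ^ 2) / f₁ ^ 2 + (τ - τ ^ 2) / f₀ ^ 2)
        - ((τ - τ ^ 2 - ∫ ω, (M₁ ω) ^ 2 ∂P) / f₁ ^ 2
            + (τ - τ ^ 2 - ∫ ω, (M₀ ω) ^ 2 ∂P) / f₀ ^ 2
            + (1 / 2) * ∫ ω, (M₁ ω / f₁ - M₀ ω / f₀) ^ 2 ∂P)
      = (1 / 2) * ∫ ω, (M₁ ω / f₁ + M₀ ω / f₀) ^ 2 ∂P
    ∧ ((τ - τ ^ 2 - ∫ ω, (M₁ ω) ^ 2 ∂P) / f₁ ^ 2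
        + (τ - τ ^ 2 - ∫ ω, (M₀ ω) ^ 2 ∂P) / f₀ ^ 2
        + (1 / 2) * ∫ ω, (M₁ ω / f₁ - M₀ ω / f₀) ^ 2 ∂P)
        ≤ (τ - τ ^ 2) / f₁ ^ 2 + (τ - τ ^ 2) / f₀ ^ 2
    ∧ ((M₁ =ᵐ[P] 0 ∧ M₀ =ᵐ[P] 0) →
        ((τ - τ ^ 2 - ∫ ω, (M₁ ω) ^ 2 ∂P) / f₁ ^ 2
          + (τ - τ ^ 2 - ∫ ω, (M₀ ω) ^ 2 ∂P) / f₀ ^ 2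
          + (1 / 2) * ∫ ω, (M₁ ω / f₁ - M₀ ω / f₀) ^ 2 ∂P)
          = (τ - τ ^ 2) / f₁ ^ 2 + (τ - τ ^ 2) / f₀ ^ 2) := by
  have hmul : ∀ (f g : Ω → ℝ), MemLp f 2 P → MemLp g 2 P →
      Integrable (fun ω => f ω * g ω) P := by
    intro f g hf hg
    have h := hg.smul (φ := f) hf (p := 2) (q := 2) (r := 1) (hpqr := ⟨by simp [one_div, ENNReal.inv_two_add_inv_two]⟩)
    simpa [smul_eq_mul, Pi.mul_def] using h.integrable le_rfl
  have iA : Integrable (fun ω => (M₁ ω) ^ 2) P := by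
    simpa [sq] using hmul M₁ M₁ hM₁ hM₁
  have iB : Integrable (fun ω => (M₀ ω) ^ 2) P := by
    simpa [sq] using hmul M₀ M₀ hM₀ hM₀
  have iC : Integrable (fun ω => M₁ ω * M₀ ω) P := hmul M₁ M₀ hM₁ hM₀
  have i1 : Integrable (fun ω => (M₁ ω) ^ 2 * (1 / f₁ ^ 2) + (M₀ ω) ^ 2 * (1 / f₀ ^ 2)) P :=
    (iA.mul_const _).add (iB.mul_const _)
  have i2 : Integrable (fun ω => M₁ ω * M₀ ω * (2 / (f₁ * f₀))) P := iC.mul_const _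
  have i3 : Integrable (fun ω => (M₁ ω) ^ 2 * (1 / f₁ ^ 2)) P := iA.mul_const _
  have i4 : Integrable (fun ω => (M₀ ω) ^ 2 * (1 / f₀ ^ 2)) P := iB.mul_const _
  have hD : ∫ ω, (M₁ ω / f₁ - M₀ ω / f₀) ^ 2 ∂P
      = (∫ ω, (M₁ ω) ^ 2 ∂P) * (1 / f₁ ^ 2) + (∫ ω, (M₀ ω) ^ 2 ∂P) * (1 / f₀ ^ 2)
        - (∫ ω, M₁ ω * M₀ ω ∂P) * (2 / (f₁ * f₀)) := by
    have h : ∀ ω, (M₁ ω / f₁ - M₀ ω / f₀) ^ 2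
        = ((M₁ ω) ^ 2 * (1 / f₁ ^ 2) + (M₀ ω) ^ 2 * (1 / f₀ ^ 2))
          - (M₁ ω * M₀ ω) * (2 / (f₁ * f₀)) := by
      intro ω; field_simp; ring
    simp only [h]
    rw [integral_sub i1 i2, integral_add i3 i4,
      integral_mul_const, integral_mul_const, integral_mul_const]
  have hS : ∫ ω, (M₁ ω / f₁ + M₀ ω / f₀) ^ 2 ∂P
      = (∫ ω, (M₁ ω) ^ 2 ∂P) * (1 / f₁ ^ 2) + (∫ ω, (M₀ ω) ^ 2 ∂P) * (1 / f₀ ^ 2)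
        + (∫ ω, M₁ ω * M₀ ω ∂P) * (2 / (f₁ * f₀)) := by
    have h : ∀ ω, (M₁ ω / f₁ + M₀ ω / f₀) ^ 2
        = ((M₁ ω) ^ 2 * (1 / f₁ ^ 2) + (M₀ ω) ^ 2 * (1 / f₀ ^ 2))
          + (M₁ ω * M₀ ω) * (2 / (f₁ * f₀)) := by
      intro ω; field_simp; ring
    simp only [h]
    rw [integral_add i1 i2, integral_add i3 i4,
      integral_mul_const, integral_mul_const, integral_mul_const]
  have hSnn : 0 ≤ ∫ ω, (M₁ ω / f₁ + M₀ ω / f₀) ^ 2 ∂P :=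
    integral_nonneg fun ω => sq_nonneg _
  have key : ((τ - τ ^ 2) / f₁ ^ 2 + (τ - τ ^ 2) / f₀ ^ 2)
        - ((τ - τ ^ 2 - ∫ ω, (M₁ ω) ^ 2 ∂P) / f₁ ^ 2
            + (τ - τ ^ 2 - ∫ ω, (M₀ ω) ^ 2 ∂P) / f₀ ^ 2
            + (1 / 2) * ∫ ω, (M₁ ω / f₁ - M₀ ω / f₀) ^ 2 ∂P)
      = (1 / 2) * ∫ ω, (M₁ ω / f₁ + M₀ ω / f₀) ^ 2 ∂P := by
    rw [hD, hS]; ring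
  have hhalf : (0:ℝ) ≤ (1 / 2) * ∫ ω, (M₁ ω / f₁ + M₀ ω / f₀) ^ 2 ∂P :=
    mul_nonneg (by norm_num) hSnn
  refine ⟨key, by linarith, ?_⟩
  · rintro ⟨h1, h0⟩
    have e1 : ∫ ω, (M₁ ω) ^ 2 ∂P = 0 := by
      rw [integral_eq_zero_iff_of_nonneg (fun ω => sq_nonneg _) iA]
      filter_upwards [h1] with ω hω; simp [hω]
    have e0 : ∫ ω, (M₀ ω) ^ 2 ∂P = 0 := by
      rw [integral_eq_zero_iff_of_nonneg (fun ω => sq_nonneg _) iB]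
      filter_upwards [h0] with ω hω; simp [hω]
    have eC : ∫ ω, M₁ ω * M₀ ω ∂P = 0 := by
      rw [integral_eq_zero_of_ae]
      filter_upwards [h1] with ω hω; simp [hω]
    rw [hD, e1, e0, eC]; ring
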